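/- For three distinct points z₁, z₂, z₃ in the open unit disk, the Hardy-kernel Gram entries k_ij = (1 - z̄_i z_j)^{-1} satisfy cos(arg(k_12 k_23 k_31)) > 0, i.e. the angular invariant A_123 = arg(k_12 k_23 k_31) satisfies |A_123| < π/2. -/

import Mathlib

/-- For three distinct points of the open unit disk, the angular invariant
`A₁₂₃ = arg(k₁₂k₂₃k₃₁)` of the Hardy-kernel Gram entries `k_ij = (1-z̄_i z_j)⁻¹`
satisfies `cos A₁₂₃ > 0`, i.e. `|A₁₂₃| < π/2`. -/
theorem hardy_angular_invariant_lt_pi_div_two (z : Fin 3 → ℂ)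
    (hz : ∀ i, ‖z i‖ < 1) (hinj : Function.Injective z) :
    0 < Real.cos (Complex.arg
        ((1 - (starRingEnd ℂ) (z 0) * z 1)⁻¹ * (1 - (starRingEnd ℂ) (z 1) * z 2)⁻¹ *
          (1 - (starRingEnd ℂ) (z 2) * z 0)⁻¹)) ∧
      |Complex.arg
        ((1 - (starRingEnd ℂ) (z 0) * z 1)⁻¹ * (1 - (starRingEnd ℂ) (z 1) * z 2)⁻¹ *
          (1 - (starRingEnd ℂ) (z 2) * z 0)⁻¹)| < Real.pi / 2 := by
  have hA : 0 < ((1 - (starRingEnd ℂ) (z 0) * z 1) * (1 - (starRingEnd ℂ) (z 1) * z 2) *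
          (1 - (starRingEnd ℂ) (z 2) * z 0)).re := by
    have key : ∀ i, (z i).re^2 + (z i).im^2 < 1 := by
      intro i
      have h := hz i
      have h2 : ‖z i‖ ^ 2 < 1 := by
        nlinarith [norm_nonneg (z i)]
      rw [Complex.sq_norm, Complex.normSq_apply] at h2
      nlinarith
    have h0 := key 0; have h1 := key 1; have h2 := key 2
    set x0 := (z 0).re; set y0 := (z 0).im
    set x1 := (z 1).re; set y1 := (z 1).im
    set x2 := (z 2).re; set y2 := (z 2).im
    simp only [Complex.mul_re, Complex.mul_im, Complex.sub_re, Complex.sub_im,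
      Complex.one_re, Complex.one_im, Complex.conj_re, Complex.conj_im]
    nlinarith [mul_nonneg (mul_nonneg (by nlinarith : (0:ℝ) ≤ 1 - (x0^2+y0^2)) (by nlinarith : (0:ℝ) ≤ 1 - (x1^2+y1^2))) (by nlinarith : (0:ℝ) ≤ 1 - (x2^2+y2^2)),
      mul_nonneg (by nlinarith : (0:ℝ) ≤ 1 - (x2^2+y2^2)) (by nlinarith [sq_nonneg (x0-x1), sq_nonneg (y0-y1)] : (0:ℝ) ≤ (x0^2+y0^2+x1^2+y1^2)/2 - (x0*x1+y0*y1)),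
      mul_nonneg (by nlinarith : (0:ℝ) ≤ 1 - (x0^2+y0^2)) (by nlinarith [sq_nonneg (x1-x2), sq_nonneg (y1-y2)] : (0:ℝ) ≤ (x1^2+y1^2+x2^2+y2^2)/2 - (x1*x2+y1*y2)),
      mul_nonneg (by nlinarith : (0:ℝ) ≤ 1 - (x1^2+y1^2)) (by nlinarith [sq_nonneg (x0-x2), sq_nonneg (y0-y2)] : (0:ℝ) ≤ (x0^2+y0^2+x2^2+y2^2)/2 - (x0*x2+y0*y2)),
      mul_pos (mul_pos (by nlinarith : (0:ℝ) < 1 - (x0^2+y0^2)) (by nlinarith : (0:ℝ) < 1 - (x1^2+y1^2))) (by nlinarith : (0:ℝ) < 1 - (x2^2+y2^2))]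
  set A := (1 - (starRingEnd ℂ) (z 0) * z 1) * (1 - (starRingEnd ℂ) (z 1) * z 2) *
      (1 - (starRingEnd ℂ) (z 2) * z 0) with hAdef
  have hAne : A ≠ 0 := by
    intro h; rw [h] at hA; simp at hA
  have hprod : (1 - (starRingEnd ℂ) (z 0) * z 1)⁻¹ * (1 - (starRingEnd ℂ) (z 1) * z 2)⁻¹ *
      (1 - (starRingEnd ℂ) (z 2) * z 0)⁻¹ = A⁻¹ := by
    rw [hAdef, mul_inv, mul_inv]
  rw [hprod]
  have hw : 0 < (A⁻¹).re := by
    rw [Complex.inv_re]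
    exact div_pos hA (Complex.normSq_pos.mpr hAne)
  have harg : |Complex.arg A⁻¹| < Real.pi / 2 :=
    Complex.abs_arg_lt_pi_div_two_iff.mpr (Or.inl hw)
  refine ⟨?_, harg⟩
  have := abs_lt.mp harg
  exact Real.cos_pos_of_mem_Ioo ⟨this.1, this.2⟩
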